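/- arXiv:0705.4353 — 2 statements merged into one kernel-verified Lean document; each statement's English description precedes it below -/
import Mathlib

section
/- Let C = C(α₀,…,α_{n-2};β) be a finite CMV matrix of order n with distinct eigenvalues ζ₁,…,ζ_n, let Φ_{n-1}(z) = det(zI − C^{(n-1)}) be the characteristic polynomial of the leading principal (n−1)×(n−1) submatrix of C, and Φ̃_n(z) = det(zI − C). Then the Weyl function satisfies w(z) = ⟨(zI−C)^{-1}e_n, e_n⟩ = Φ_{n-1}(z)/Φ̃_n(z); moreover Φ_{n-1}(ζ_j) ≠ 0 for every j, the masses of the n-th spectral measure of C are μ_j = Φ_{n-1}(ζ_j)/Φ̃_n'(ζ_j), each μ_j is a strictly positive real number, and Σ_{j=1}^n μ_j = 1. -/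
open Complex Polynomial Matrix BigOperators Finset

noncomputable section

namespace CMVPaper

/-- `ρ(α) = √(1 − |α|²)`. -/
def rhoC (a : ℂ) : ℝ := Real.sqrt (1 - ‖a‖ ^ 2)

/-- The factor `L = Θ(α₀) ⊕ Θ(α₂) ⊕ …` of the CMV matrix, with a final `1×1` block
equal to `conj β` appended when `n` is odd. -/
def cmvL (n : ℕ) (α : ℕ → ℂ) (β : ℂ) : Matrix (Fin n) (Fin n) ℂ :=
  Matrix.of fun i j =>
    if Even (i : ℕ) then
      if (i : ℕ) = n - 1 then (if j = i then (starRingEnd ℂ) β else 0)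
      else if j = i then (starRingEnd ℂ) (α (i : ℕ))
      else if (j : ℕ) = (i : ℕ) + 1 then ((rhoC (α (i : ℕ)) : ℝ) : ℂ)
      else 0
    else
      if (j : ℕ) + 1 = (i : ℕ) then ((rhoC (α ((i : ℕ) - 1)) : ℝ) : ℂ)
      else if j = i then -α ((i : ℕ) - 1)
      else 0

/-- The factor `M = (1) ⊕ Θ(α₁) ⊕ Θ(α₃) ⊕ …` of the CMV matrix, with a final `1×1` block
equal to `conj β` appended when `n` is even. -/
def cmvM (n : ℕ) (α : ℕ → ℂ) (β : ℂ) : Matrix (Fin n) (Fin n) ℂ :=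
  Matrix.of fun i j =>
    if (i : ℕ) = 0 then (if j = i then 1 else 0)
    else if Odd (i : ℕ) then
      if (i : ℕ) = n - 1 then (if j = i then (starRingEnd ℂ) β else 0)
      else if j = i then (starRingEnd ℂ) (α (i : ℕ))
      else if (j : ℕ) = (i : ℕ) + 1 then ((rhoC (α (i : ℕ)) : ℝ) : ℂ)
      else 0
    else
      if (j : ℕ) + 1 = (i : ℕ) then ((rhoC (α ((i : ℕ) - 1)) : ℝ) : ℂ)
      else if j = i then -α ((i : ℕ) - 1)
      else 0

/-- The finite CMV matrix `C(α₀,…,α_{n-2};β) = L·M` of order `n`. -/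
def CMVmat (n : ℕ) (α : ℕ → ℂ) (β : ℂ) : Matrix (Fin n) (Fin n) ℂ :=
  cmvL n α β * cmvM n α β

/-- Extension of a finite tuple of Verblunsky coefficients to a function on `ℕ`. -/
def extFun {m : ℕ} (α : Fin m → ℂ) : ℕ → ℂ := fun k => if h : k < m then α ⟨k, h⟩ else 0

/-- The leading principal `k×k` submatrix of an `n×n` matrix (entries out of range set to `0`;
for `k ≤ n` this is the usual leading principal submatrix). -/
def leadPrincipal {n : ℕ} (M : Matrix (Fin n) (Fin n) ℂ) (k : ℕ) : Matrix (Fin k) (Fin k) ℂ :=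
  Matrix.of fun i j =>
    if hi : (i : ℕ) < n then if hj : (j : ℕ) < n then M ⟨i, hi⟩ ⟨j, hj⟩ else 0 else 0

/-- The Szegő polynomial `Φ_k(z) = det (z·I_k − C^{(k)})`, the characteristic polynomial of the
leading principal `k×k` submatrix of the CMV matrix `C(α;β)` of order `n`. -/
def PhiPoly (n : ℕ) (α : ℕ → ℂ) (β : ℂ) (k : ℕ) : Polynomial ℂ :=
  Matrix.charpoly (leadPrincipal (CMVmat n α β) k)

/-- The `*`-transform of a polynomial of degree (at most) `k`:
`P*(z) = z^k · conj (P (1/conj z))`, i.e. coefficientwise `(P*)_j = conj (P_{k-j})`. -/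
def starPoly (k : ℕ) (p : Polynomial ℂ) : Polynomial ℂ :=
  Polynomial.reflect k (p.map (starRingEnd ℂ))

/-- The standard inner product `⟨u, v⟩ = ∑ u_i conj (v_i)` on `ℂⁿ`. -/
def innerC {n : ℕ} (u v : Fin n → ℂ) : ℂ := ∑ i, u i * (starRingEnd ℂ) (v i)

/-- The last standard basis vector `e_n` of `ℂⁿ`. -/
def lastVec (n : ℕ) : Fin n → ℂ := fun i => if (i : ℕ) = n - 1 then 1 else 0

/-- The Weyl function `w(z) = ⟨(zI − C)⁻¹ e_n, e_n⟩`. -/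
def weylFn {n : ℕ} (M : Matrix (Fin n) (Fin n) ℂ) (z : ℂ) : ℂ :=
  innerC ((z • (1 : Matrix (Fin n) (Fin n) ℂ) - M)⁻¹ *ᵥ lastVec n) (lastVec n)

/-- The spectrum of a matrix, as the zero set of its characteristic polynomial. -/
def specSet {n : ℕ} (M : Matrix (Fin n) (Fin n) ℂ) : Set ℂ :=
  {z : ℂ | (Matrix.charpoly M).eval z = 0}

/-- Two `m`-point subsets of the unit circle interlace: labeling each as
`{e^{i x_{j,l}}}` with `0 ≤ x_{1,l} < … < x_{m,l} < 2π`, possibly after swapping the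
two sets, `x_{1,1} < x_{1,2} < x_{2,1} < x_{2,2} < … < x_{m,1} < x_{m,2}`. -/
def InterlaceOnT (m : ℕ) (Z₁ Z₂ : Set ℂ) : Prop :=
  ∃ x₁ x₂ : Fin m → ℝ,
    (∀ j, 0 ≤ x₁ j ∧ x₁ j < 2 * Real.pi) ∧
    (∀ j, 0 ≤ x₂ j ∧ x₂ j < 2 * Real.pi) ∧
    StrictMono x₁ ∧ StrictMono x₂ ∧
    Z₁ = Set.range (fun j => Complex.exp (Complex.I * (x₁ j : ℂ))) ∧
    Z₂ = Set.range (fun j => Complex.exp (Complex.I * (x₂ j : ℂ))) ∧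
    ((∀ j : Fin m, x₁ j < x₂ j ∧ ∀ h : (j : ℕ) + 1 < m, x₂ j < x₁ ⟨(j : ℕ) + 1, h⟩) ∨
     (∀ j : Fin m, x₂ j < x₁ j ∧ ∀ h : (j : ℕ) + 1 < m, x₁ j < x₂ ⟨(j : ℕ) + 1, h⟩))


section Aux
variable {n : ℕ} (α : ℕ → ℂ) (β : ℂ)

lemma charpoly_eval {k : ℕ} (M : Matrix (Fin k) (Fin k) ℂ) (t : ℂ) :
    M.charpoly.eval t = (t • (1 : Matrix (Fin k) (Fin k) ℂ) - M).det := by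
  rw [Matrix.charpoly, eval_det, matPolyEquiv_charmatrix, eval_sub, eval_X, eval_C]
  congr 1
  rw [Matrix.scalar_apply, Matrix.smul_eq_diagonal_mul]
  simp

lemma rho_sq {a : ℂ} (ha : ‖a‖ < 1) :
    (rhoC a : ℝ) ^ 2 = 1 - ‖a‖ ^ 2 := by
  have : (0:ℝ) ≤ 1 - ‖a‖ ^ 2 := by nlinarith [norm_nonneg a]
  simpa [rhoC] using Real.sq_sqrt this

lemma rho_pos {a : ℂ} (ha : ‖a‖ < 1) : 0 < rhoC a := by
  apply Real.sqrt_pos.2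
  nlinarith [norm_nonneg a]

lemma rho_ne {a : ℂ} (ha : ‖a‖ < 1) : ((rhoC a : ℝ) : ℂ) ≠ 0 := by
  exact_mod_cast (rho_pos ha).ne'

lemma sum_two (f : Fin n → ℂ) (a b : Fin n) (hab : a ≠ b)
    (h : ∀ j, j ≠ a → j ≠ b → f j = 0) : ∑ j, f j = f a + f b := by
  rw [← Finset.sum_pair hab]
  refine (Finset.sum_subset (Finset.subset_univ _) ?_).symm
  intro x _ hx
  simp only [Finset.mem_insert, Finset.mem_singleton, not_or] at hx
  exact h x hx.1 hx.2

lemma sum_one (f : Fin n → ℂ) (a : Fin n) (h : ∀ j, j ≠ a → f j = 0) :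
    ∑ j, f j = f a :=
  Finset.sum_eq_single_of_mem a (Finset.mem_univ a) (fun j _ hj => h j hj)

lemma Lrow1 {k : ℕ} (hk : Even k) (hkn : k ≠ n - 1) (hk1 : k + 1 < n) (x : Fin n → ℂ) :
    (cmvL n α β *ᵥ x) ⟨k, by omega⟩ =
      (starRingEnd ℂ) (α k) * x ⟨k, by omega⟩ + ((rhoC (α k) : ℝ) : ℂ) * x ⟨k + 1, hk1⟩ := by
  show ∑ j, cmvL n α β ⟨k, by omega⟩ j * x j = _
  rw [sum_two _ ⟨k, by omega⟩ ⟨k + 1, hk1⟩ (by simp)]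
  · congr 1 <;> [skip; skip] <;>
    · congr 1
      simp [cmvL, hk, hkn]
  · intro j hj1 hj2
    -- hj1 now ¬↑j = k
    simp only [ne_eq, Fin.ext_iff] at hj1 hj2
    have h2 : ¬ ((j : ℕ) = k + 1) := by omega
    simp [cmvL, hk, hkn, h2, Fin.ext_iff, hj1]

lemma Lrow2 {k : ℕ} (hk : Even k) (hk1 : k + 1 < n) (x : Fin n → ℂ) :
    (cmvL n α β *ᵥ x) ⟨k + 1, hk1⟩ =
      ((rhoC (α k) : ℝ) : ℂ) * x ⟨k, by omega⟩ - α k * x ⟨k + 1, hk1⟩ := by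
  show ∑ j, cmvL n α β ⟨k + 1, hk1⟩ j * x j = _
  have hodd : ¬ Even (k + 1) := by simp [Nat.even_add_one, hk]
  rw [sum_two _ ⟨k, by omega⟩ ⟨k + 1, hk1⟩ (by simp)]
  · have e1 : cmvL n α β ⟨k + 1, hk1⟩ ⟨k, by omega⟩ = ((rhoC (α k) : ℝ) : ℂ) := by
      simp [cmvL, hodd]
    have e2 : cmvL n α β ⟨k + 1, hk1⟩ ⟨k + 1, hk1⟩ = -α k := by
      simp [cmvL, hodd]
    rw [e1, e2]; ring
  · intro j hj1 hj2
    simp only [ne_eq, Fin.ext_iff] at hj1 hj2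
    have h1 : ¬ ((j : ℕ) + 1 = k + 1) := by omega
    simp [cmvL, hodd, h1, Fin.ext_iff, hj2, hj1]

lemma Lrow3 (hn : 0 < n) (hpar : Even (n - 1)) (x : Fin n → ℂ) :
    (cmvL n α β *ᵥ x) ⟨n - 1, by omega⟩ = (starRingEnd ℂ) β * x ⟨n - 1, by omega⟩ := by
  show ∑ j, cmvL n α β ⟨n - 1, by omega⟩ j * x j = _
  rw [sum_one _ ⟨n - 1, by omega⟩]
  · congr 1
    simp [cmvL, hpar]
  · intro j hj
    simp [cmvL, hpar, hj]
end Aux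
section Aux2
variable {n : ℕ} (α : ℕ → ℂ) (β : ℂ)

lemma Mrow0 (hn : 0 < n) (x : Fin n → ℂ) :
    (cmvM n α β *ᵥ x) ⟨0, hn⟩ = x ⟨0, hn⟩ := by
  show ∑ j, cmvM n α β ⟨0, hn⟩ j * x j = _
  rw [sum_one _ ⟨0, hn⟩]
  · simp [cmvM]
  · intro j hj
    simp [cmvM, hj]

lemma Mrow1 {k : ℕ} (hk : Odd k) (hkn : k ≠ n - 1) (hk1 : k + 1 < n) (x : Fin n → ℂ) :
    (cmvM n α β *ᵥ x) ⟨k, by omega⟩ =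
      (starRingEnd ℂ) (α k) * x ⟨k, by omega⟩ + ((rhoC (α k) : ℝ) : ℂ) * x ⟨k + 1, hk1⟩ := by
  have hk0 : k ≠ 0 := by rintro rfl; simp [Nat.odd_iff] at hk
  show ∑ j, cmvM n α β ⟨k, by omega⟩ j * x j = _
  rw [sum_two _ ⟨k, by omega⟩ ⟨k + 1, hk1⟩ (by simp)]
  · congr 1 <;>
    · congr 1
      simp [cmvM, hk, hkn, hk0]
  · intro j hj1 hj2
    simp only [ne_eq, Fin.ext_iff] at hj1 hj2
    have h2 : ¬ ((j : ℕ) = k + 1) := by omega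
    simp [cmvM, hk, hkn, hk0, h2, Fin.ext_iff, hj1]

lemma Mrow2 {k : ℕ} (hk : Odd k) (hk1 : k + 1 < n) (x : Fin n → ℂ) :
    (cmvM n α β *ᵥ x) ⟨k + 1, hk1⟩ =
      ((rhoC (α k) : ℝ) : ℂ) * x ⟨k, by omega⟩ - α k * x ⟨k + 1, hk1⟩ := by
  show ∑ j, cmvM n α β ⟨k + 1, hk1⟩ j * x j = _
  have hk0 : k + 1 ≠ 0 := by omega
  have hodd : ¬ Odd (k + 1) := by simp [Nat.odd_add_one]; exact hk
  rw [sum_two _ ⟨k, by omega⟩ ⟨k + 1, hk1⟩ (by simp)]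
  · have e1 : cmvM n α β ⟨k + 1, hk1⟩ ⟨k, by omega⟩ = ((rhoC (α k) : ℝ) : ℂ) := by
      simp [cmvM, hodd, hk0]
    have e2 : cmvM n α β ⟨k + 1, hk1⟩ ⟨k + 1, hk1⟩ = -α k := by
      simp [cmvM, hodd, hk0]
    rw [e1, e2]; ring
  · intro j hj1 hj2
    simp only [ne_eq, Fin.ext_iff] at hj1 hj2
    have h1 : ¬ ((j : ℕ) + 1 = k + 1) := by omega
    simp [cmvM, hodd, hk0, h1, Fin.ext_iff, hj2, hj1]

lemma Mrow3 (hn : 0 < n) (hpar : Odd (n - 1)) (x : Fin n → ℂ) :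
    (cmvM n α β *ᵥ x) ⟨n - 1, by omega⟩ = (starRingEnd ℂ) β * x ⟨n - 1, by omega⟩ := by
  have h0 : n - 1 ≠ 0 := by rintro h; rw [h] at hpar; simp [Nat.odd_iff] at hpar
  show ∑ j, cmvM n α β ⟨n - 1, by omega⟩ j * x j = _
  rw [sum_one _ ⟨n - 1, by omega⟩]
  · congr 1
    simp [cmvM, hpar, h0]
  · intro j hj
    simp [cmvM, hpar, h0, hj]
end Aux2
section Aux3
variable {n : ℕ} {α : ℕ → ℂ} {β : ℂ}

lemma rho_conj_sum {a : ℂ} (ha : ‖a‖ < 1) :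
    ((rhoC a : ℝ) : ℂ) ^ 2 + (starRingEnd ℂ) a * a = 1 := by
  have h1 : ((rhoC a : ℝ) : ℂ) ^ 2 = ((rhoC a ^ 2 : ℝ) : ℂ) := by push_cast; ring
  rw [h1, rho_sq ha, mul_comm, Complex.mul_conj, ← Complex.sq_norm]
  push_cast; ring

lemma block_solve {a b c : ℂ} (ha : ‖a‖ < 1)
    (h1 : (starRingEnd ℂ) a * b + ((rhoC a : ℝ) : ℂ) * c = 0)
    (h2 : ((rhoC a : ℝ) : ℂ) * b - a * c = 0) : b = 0 ∧ c = 0 := by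
  have key : (((rhoC a : ℝ) : ℂ) ^ 2 + (starRingEnd ℂ) a * a) * c = 0 := by
    linear_combination ((rhoC a : ℝ) : ℂ) * h1 - (starRingEnd ℂ) a * h2
  rw [rho_conj_sum ha, one_mul] at key
  subst key
  exact ⟨(mul_eq_zero.1 (by linear_combination h2)).resolve_left (rho_ne ha), rfl⟩

lemma conj_beta_ne (hβ : ‖β‖ = 1) : (starRingEnd ℂ) β ≠ 0 := by
  simp only [ne_eq, _root_.map_eq_zero]
  intro hb; rw [hb] at hβ; simp at hβ

lemma cmvL_inj (hn : 2 ≤ n) (hα : ∀ j, j < n - 1 → ‖α j‖ < 1)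
    (hβ : ‖β‖ = 1) (x : Fin n → ℂ) (hx : cmvL n α β *ᵥ x = 0) : x = 0 := by
  have hβ' := conj_beta_ne hβ
  have block : ∀ (k : ℕ) (_ : Even k) (hk1 : k + 1 < n), k ≠ n - 1 →
      x ⟨k, by omega⟩ = 0 ∧ x ⟨k + 1, by omega⟩ = 0 := by
    intro k hk hk1 hkn
    have hαk : ‖α k‖ < 1 := hα k (by omega)
    have e1 := Lrow1 α β hk hkn hk1 x
    have e2 := Lrow2 α β hk hk1 x
    rw [hx] at e1 e2
    exact block_solve hαk (by rw [← e1]; rfl) (by rw [← e2]; rfl)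
  funext i
  show x i = 0
  rcases Nat.even_or_odd (i : ℕ) with hpar | hpar
  · by_cases hin : (i : ℕ) = n - 1
    · have e3 := Lrow3 α β (show 0 < n by omega) (hin ▸ hpar) x
      rw [hx] at e3
      have hieq : i = ⟨n - 1, by omega⟩ := Fin.ext hin
      rw [hieq]
      exact (mul_eq_zero.1 e3.symm).resolve_left hβ'
    · have hi1 : (i : ℕ) + 1 < n := by have := i.2; omega
      have hieq : i = ⟨(i : ℕ), i.2⟩ := Fin.ext rfl
      rw [hieq]
      exact (block i hpar hi1 hin).1
  · have hi0 : (i : ℕ) ≠ 0 := by rintro h; rw [h] at hpar; simp [Nat.odd_iff] at hpar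
    have hk : Even ((i : ℕ) - 1) := by
      rcases hpar with ⟨t, ht⟩; exact ⟨t, by omega⟩
    have hk1 : (i : ℕ) - 1 + 1 < n := by have := i.2; omega
    have hkn : (i : ℕ) - 1 ≠ n - 1 := by have := i.2; omega
    have hieq : i = ⟨(i : ℕ) - 1 + 1, hk1⟩ := Fin.ext (by simp; omega)
    rw [hieq]
    exact (block ((i : ℕ) - 1) hk hk1 hkn).2

lemma cmvM_inj (hn : 2 ≤ n) (hα : ∀ j, j < n - 1 → ‖α j‖ < 1)
    (hβ : ‖β‖ = 1) (x : Fin n → ℂ) (hx : cmvM n α β *ᵥ x = 0) : x = 0 := by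
  have hβ' := conj_beta_ne hβ
  have block : ∀ (k : ℕ) (_ : Odd k) (hk1 : k + 1 < n), k ≠ n - 1 →
      x ⟨k, by omega⟩ = 0 ∧ x ⟨k + 1, by omega⟩ = 0 := by
    intro k hk hk1 hkn
    have hαk : ‖α k‖ < 1 := hα k (by omega)
    have e1 := Mrow1 α β hk hkn hk1 x
    have e2 := Mrow2 α β hk hk1 x
    rw [hx] at e1 e2
    exact block_solve hαk (by rw [← e1]; rfl) (by rw [← e2]; rfl)
  funext i
  show x i = 0
  rcases Nat.even_or_odd (i : ℕ) with hpar | hpar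
  · by_cases hi0 : (i : ℕ) = 0
    · have e0 := Mrow0 α β (show 0 < n by omega) x
      rw [hx] at e0
      have hieq : i = ⟨0, by omega⟩ := Fin.ext hi0
      rw [hieq]
      exact e0.symm
    · have hk : Odd ((i : ℕ) - 1) := by
        rcases hpar with ⟨t, ht⟩; exact ⟨t - 1, by omega⟩
      have hk1 : (i : ℕ) - 1 + 1 < n := by have := i.2; omega
      have hkn : (i : ℕ) - 1 ≠ n - 1 := by
        intro hc; have := i.2; omega
      have hieq : i = ⟨(i : ℕ) - 1 + 1, hk1⟩ := Fin.ext (by simp; omega)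
      rw [hieq]
      exact (block ((i : ℕ) - 1) hk hk1 hkn).2
  · by_cases hin : (i : ℕ) = n - 1
    · have e3 := Mrow3 α β (show 0 < n by omega) (hin ▸ hpar) x
      rw [hx] at e3
      have hieq : i = ⟨n - 1, by omega⟩ := Fin.ext hin
      rw [hieq]
      exact (mul_eq_zero.1 e3.symm).resolve_left hβ'
    · have hi1 : (i : ℕ) + 1 < n := by have := i.2; omega
      have hieq : i = ⟨(i : ℕ), i.2⟩ := Fin.ext rfl
      rw [hieq]
      exact (block i hpar hi1 hin).1

lemma det_CMV_ne (hn : 2 ≤ n) (hα : ∀ j, j < n - 1 → ‖α j‖ < 1)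
    (hβ : ‖β‖ = 1) : (CMVmat n α β).det ≠ 0 := by
  rw [CMVmat, Matrix.det_mul]
  have hL : (cmvL n α β).det ≠ 0 := by
    intro hc
    obtain ⟨v, hv, hv0⟩ := (Matrix.exists_mulVec_eq_zero_iff).2 hc
    exact hv (cmvL_inj hn hα hβ v hv0)
  have hM : (cmvM n α β).det ≠ 0 := by
    intro hc
    obtain ⟨v, hv, hv0⟩ := (Matrix.exists_mulVec_eq_zero_iff).2 hc
    exact hv (cmvM_inj hn hα hβ v hv0)
  exact mul_ne_zero hL hM
end Aux3
section Aux4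
variable {n : ℕ} {α : ℕ → ℂ} {β : ℂ}

lemma eigvec_last_ne_zero (hn : 2 ≤ n) (hα : ∀ j, j < n - 1 → ‖α j‖ < 1)
    (hβ : ‖β‖ = 1) {ζ : ℂ} (hζ0 : ζ ≠ 0) {v : Fin n → ℂ}
    (hv : CMVmat n α β *ᵥ v = ζ • v) (hlast : v ⟨n - 1, by omega⟩ = 0) : v = 0 := by
  have hβ' := conj_beta_ne hβ
  set w : Fin n → ℂ := cmvM n α β *ᵥ v with hw
  have hLw : cmvL n α β *ᵥ w = ζ • v := by
    rw [hw, Matrix.mulVec_mulVec]; exact hv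
  -- downward induction
  have main : ∀ d : ℕ, ∀ hd : n - 1 - d < n,
      v ⟨n - 1 - d, hd⟩ = 0 ∧ w ⟨n - 1 - d, hd⟩ = 0 := by
    intro d
    induction d with
    | zero =>
      intro hd
      refine ⟨hlast, ?_⟩
      rcases Nat.even_or_odd (n - 1) with hpar | hpar
      · -- use L row n-1
        have e3 := Lrow3 α β (show 0 < n by omega) hpar w
        rw [hLw] at e3
        have e3' : ζ * v ⟨n - 1, by omega⟩ = (starRingEnd ℂ) β * w ⟨n - 1, by omega⟩ := e3
        rw [hlast, mul_zero] at e3'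
        exact (mul_eq_zero.1 e3'.symm).resolve_left hβ'
      · have e3 := Mrow3 α β (show 0 < n by omega) hpar v
        have e3' : w ⟨n - 1, by omega⟩ = (starRingEnd ℂ) β * v ⟨n - 1, by omega⟩ := e3
        rw [hlast, mul_zero] at e3'
        exact e3'
    | succ d ih =>
      intro hd
      by_cases h0 : n - 1 - d = 0
      · have heq : n - 1 - (d + 1) = n - 1 - d := by omega
        have := ih (by omega)
        constructor
        · have hveq : (⟨n - 1 - (d + 1), hd⟩ : Fin n) = ⟨n - 1 - d, by omega⟩ :=
            Fin.ext heq
          rw [hveq]; exact this.1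
        · have hveq : (⟨n - 1 - (d + 1), hd⟩ : Fin n) = ⟨n - 1 - d, by omega⟩ :=
            Fin.ext heq
          rw [hveq]; exact this.2
      · set k := n - 1 - (d + 1) with hkdef
        have hk1n : k + 1 < n := by omega
        have hkeq : n - 1 - d = k + 1 := by omega
        have ih' := ih (by omega)
        have hv1 : v ⟨k + 1, hk1n⟩ = 0 := by
          have hveq : (⟨n - 1 - d, by omega⟩ : Fin n) = ⟨k + 1, hk1n⟩ := Fin.ext hkeq
          rw [← hveq]; exact ih'.1
        have hw1 : w ⟨k + 1, hk1n⟩ = 0 := by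
          have hveq : (⟨n - 1 - d, by omega⟩ : Fin n) = ⟨k + 1, hk1n⟩ := Fin.ext hkeq
          rw [← hveq]; exact ih'.2
        have hαk : ‖α k‖ < 1 := hα k (by omega)
        have hρ := rho_ne hαk
        rcases Nat.even_or_odd k with hpar | hpar
        · -- L rows k, k+1
          have e2 := Lrow2 α β hpar hk1n w
          rw [hLw] at e2
          have e2' : ζ * v ⟨k + 1, hk1n⟩ =
              ((rhoC (α k) : ℝ) : ℂ) * w ⟨k, by omega⟩ - α k * w ⟨k + 1, hk1n⟩ := e2
          rw [hv1, hw1, mul_zero, mul_zero, sub_zero] at e2'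
          have hwk : w ⟨k, by omega⟩ = 0 :=
            (mul_eq_zero.1 e2'.symm).resolve_left hρ
          refine ⟨?_, hwk⟩
          have e1 := Lrow1 α β hpar (by omega) hk1n w
          rw [hLw] at e1
          have e1' : ζ * v ⟨k, by omega⟩ =
              (starRingEnd ℂ) (α k) * w ⟨k, by omega⟩ +
                ((rhoC (α k) : ℝ) : ℂ) * w ⟨k + 1, hk1n⟩ := e1
          rw [hwk, hw1, mul_zero, mul_zero, add_zero] at e1'
          exact (mul_eq_zero.1 e1').resolve_left hζ0
        · -- M rows k, k+1
          have e2 := Mrow2 α β hpar hk1n v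
          have e2' : w ⟨k + 1, hk1n⟩ =
              ((rhoC (α k) : ℝ) : ℂ) * v ⟨k, by omega⟩ - α k * v ⟨k + 1, hk1n⟩ := e2
          rw [hw1, hv1, mul_zero, sub_zero] at e2'
          have hvk : v ⟨k, by omega⟩ = 0 :=
            (mul_eq_zero.1 e2'.symm).resolve_left hρ
          refine ⟨hvk, ?_⟩
          have e1 := Mrow1 α β hpar (by omega) hk1n v
          have e1' : w ⟨k, by omega⟩ =
              (starRingEnd ℂ) (α k) * v ⟨k, by omega⟩ +
                ((rhoC (α k) : ℝ) : ℂ) * v ⟨k + 1, hk1n⟩ := e1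
          rw [hvk, hv1, mul_zero, mul_zero, add_zero] at e1'
          exact e1'
  funext i
  have hd : n - 1 - (n - 1 - (i : ℕ)) < n := by have := i.2; omega
  have heq : i = ⟨n - 1 - (n - 1 - (i : ℕ)), hd⟩ := Fin.ext (by have := i.2; simp; omega)
  show v i = 0
  rw [heq]
  exact (main (n - 1 - (i : ℕ)) hd).1
end Aux4
section Aux5
variable {m : ℕ}

lemma innerC_lastVec (u : Fin (m + 1) → ℂ) : innerC u (lastVec (m + 1)) = u (Fin.last m) := by
  rw [innerC, sum_one _ (Fin.last m)]
  · simp [lastVec]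
  · intro j hj
    have : (j : ℕ) ≠ m := fun hc => hj (Fin.ext (by simpa using hc))
    simp [lastVec, this]

lemma mulVec_lastVec (A : Matrix (Fin (m + 1)) (Fin (m + 1)) ℂ) (i : Fin (m + 1)) :
    (A *ᵥ lastVec (m + 1)) i = A i (Fin.last m) := by
  show ∑ j, A i j * lastVec (m + 1) j = _
  rw [sum_one _ (Fin.last m)]
  · simp [lastVec]
  · intro j hj
    have : (j : ℕ) ≠ m := fun hc => hj (Fin.ext (by simpa using hc))
    simp [lastVec, this]

lemma submatrix_lead (C : Matrix (Fin (m + 1)) (Fin (m + 1)) ℂ) :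
    C.submatrix Fin.castSucc Fin.castSucc = leadPrincipal C m := by
  ext i j
  simp only [Matrix.submatrix_apply, leadPrincipal, Matrix.of_apply]
  rw [dif_pos (by omega : (i : ℕ) < m + 1), dif_pos (by omega : (j : ℕ) < m + 1)]
  congr 1 <;> exact (Fin.ext rfl)

lemma adjugate_last (C : Matrix (Fin (m + 1)) (Fin (m + 1)) ℂ) (z : ℂ) :
    (z • (1 : Matrix (Fin (m + 1)) (Fin (m + 1)) ℂ) - C).adjugate (Fin.last m) (Fin.last m) =
      (Matrix.charpoly (leadPrincipal C m)).eval z := by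
  set A := z • (1 : Matrix (Fin (m + 1)) (Fin (m + 1)) ℂ) - C with hA
  rw [Matrix.adjugate_apply, Matrix.det_succ_row _ (Fin.last m)]
  rw [Finset.sum_eq_single (Fin.last m)]
  · rw [Matrix.updateRow_self]
    simp only [Pi.single_eq_same]
    have hsub : (A.updateRow (Fin.last m) (Pi.single (Fin.last m) 1)).submatrix
        (Fin.last m).succAbove (Fin.last m).succAbove =
        (z • (1 : Matrix (Fin m) (Fin m) ℂ) - leadPrincipal C m) := by
      ext i j
      rw [Matrix.submatrix_apply]
      simp only [Fin.succAbove_last]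
      rw [Matrix.updateRow_apply, if_neg (Fin.castSucc_lt_last i).ne]
      have h1 : ((1 : Matrix (Fin (m + 1)) (Fin (m + 1)) ℂ)) i.castSucc j.castSucc =
          (1 : Matrix (Fin m) (Fin m) ℂ) i j := by
        simp only [Matrix.one_apply]
        by_cases hij : i = j
        · simp [hij]
        · rw [if_neg (fun hc => hij (Fin.castSucc_injective m hc)), if_neg hij]
      have h2 : C i.castSucc j.castSucc = leadPrincipal C m i j := by
        rw [← submatrix_lead]; rfl
      simp only [hA, Matrix.sub_apply, Matrix.smul_apply, h1, h2]
    rw [hsub, ← charpoly_eval]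
    have : ((-1 : ℂ)) ^ ((Fin.last m : ℕ) + (Fin.last m : ℕ)) = 1 := by
      rw [Fin.val_last]
      exact Even.neg_one_pow ⟨m, rfl⟩
    rw [this, one_mul, one_mul]
  · intro j _ hj
    rw [Matrix.updateRow_self]
    rw [Pi.single_eq_of_ne hj, mul_zero, zero_mul]
  · intro hc
    exact absurd (Finset.mem_univ _) hc

lemma weyl_eq_ratio {α : ℕ → ℂ} {β : ℂ} (z : ℂ)
    (hdet : (z • (1 : Matrix (Fin (m + 1)) (Fin (m + 1)) ℂ) - CMVmat (m + 1) α β).det ≠ 0) :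
    weylFn (CMVmat (m + 1) α β) z =
      (PhiPoly (m + 1) α β m).eval z / (Matrix.charpoly (CMVmat (m + 1) α β)).eval z := by
  set C := CMVmat (m + 1) α β with hC
  set A := z • (1 : Matrix (Fin (m + 1)) (Fin (m + 1)) ℂ) - C with hA
  rw [weylFn, innerC_lastVec, mulVec_lastVec]
  rw [Matrix.inv_def, Matrix.smul_apply, Ring.inverse_eq_inv']
  have hphi : PhiPoly (m + 1) α β m = Matrix.charpoly (leadPrincipal C m) := rfl
  rw [hphi, ← adjugate_last C z, charpoly_eval]
  rw [smul_eq_mul, div_eq_inv_mul]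

lemma lead_eq (C : Matrix (Fin (m + 1)) (Fin (m + 1)) ℂ) :
    leadPrincipal C (m + 1 - 1) = leadPrincipal C m := rfl
end Aux5
section Aux6
variable {m : ℕ}

lemma completeness (h : Fin (m + 1) → Fin (m + 1) → ℂ)
    (horth : ∀ j k, innerC (h j) (h k) = if j = k then 1 else 0) :
    ∀ i k, ∑ j, h j i * (starRingEnd ℂ) (h j k) = if i = k then 1 else 0 := by
  set G : Matrix (Fin (m + 1)) (Fin (m + 1)) ℂ := Matrix.of fun i j => h j i with hG
  have hG1 : Gᴴ * G = 1 := by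
    ext j k
    rw [Matrix.mul_apply]
    have : ∑ i, Gᴴ j i * G i k = ∑ i, h k i * (starRingEnd ℂ) (h j i) := by
      apply Finset.sum_congr rfl
      intro i _
      rw [Matrix.conjTranspose_apply]
      show (starRingEnd ℂ) (h j i) * h k i = _
      ring
    rw [this]
    have := horth k j
    rw [innerC] at this
    rw [this, Matrix.one_apply]
    by_cases hjk : j = k <;> simp [hjk, eq_comm]
  have hG2 : G * Gᴴ = 1 := mul_eq_one_comm.mp hG1
  intro i k
  have := congrFun (congrFun hG2 i) k
  rw [Matrix.mul_apply] at this
  rw [Matrix.one_apply] at this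
  rw [← this]
  apply Finset.sum_congr rfl
  intro j _
  rw [Matrix.conjTranspose_apply]
  rfl

lemma deriv_prod_eval (ζ : Fin (m + 1) → ℂ) (j : Fin (m + 1)) :
    (Polynomial.derivative (∏ k, (Polynomial.X - Polynomial.C (ζ k)))).eval (ζ j) =
      ∏ k ∈ Finset.univ.erase j, (ζ j - ζ k) := by
  rw [← Finset.mul_prod_erase _ _ (Finset.mem_univ j), derivative_mul]
  simp only [derivative_sub, derivative_X, derivative_C, sub_zero, one_mul]
  rw [eval_add, eval_mul, eval_sub, eval_X, eval_C, sub_self, zero_mul, add_zero, eval_prod]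
  simp
end Aux6
section Aux7
variable {m : ℕ}

lemma eval_charpoly_prod {α : ℕ → ℂ} {β : ℂ} {ζ : Fin (m + 1) → ℂ}
    (hζ : Matrix.charpoly (CMVmat (m + 1) α β) = ∏ j, (Polynomial.X - Polynomial.C (ζ j)))
    (z : ℂ) : (Matrix.charpoly (CMVmat (m + 1) α β)).eval z = ∏ j, (z - ζ j) := by
  rw [hζ, eval_prod]
  simp

lemma det_resolvent_ne {α : ℕ → ℂ} {β : ℂ} {ζ : Fin (m + 1) → ℂ}
    (hζ : Matrix.charpoly (CMVmat (m + 1) α β) = ∏ j, (Polynomial.X - Polynomial.C (ζ j)))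
    (z : ℂ) (hz : ∀ j, z ≠ ζ j) :
    (z • (1 : Matrix (Fin (m + 1)) (Fin (m + 1)) ℂ) - CMVmat (m + 1) α β).det ≠ 0 := by
  rw [← charpoly_eval, eval_charpoly_prod hζ]
  exact Finset.prod_ne_zero_iff.2 fun j _ => sub_ne_zero.2 (hz j)

lemma resolvent_sum {α : ℕ → ℂ} {β : ℂ} {ζ : Fin (m + 1) → ℂ}
    (hζ : Matrix.charpoly (CMVmat (m + 1) α β) = ∏ j, (Polynomial.X - Polynomial.C (ζ j)))
    (h : Fin (m + 1) → Fin (m + 1) → ℂ)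
    (heig : ∀ j, CMVmat (m + 1) α β *ᵥ h j = ζ j • h j)
    (hcomp : ∀ i k, ∑ j, h j i * (starRingEnd ℂ) (h j k) = if i = k then 1 else 0)
    (z : ℂ) (hz : ∀ j, z ≠ ζ j) :
    weylFn (CMVmat (m + 1) α β) z =
      ∑ j, ((starRingEnd ℂ) (h j (Fin.last m)) * (z - ζ j)⁻¹) * h j (Fin.last m) := by
  set C := CMVmat (m + 1) α β with hC
  set A := z • (1 : Matrix (Fin (m + 1)) (Fin (m + 1)) ℂ) - C with hA
  have hdet : A.det ≠ 0 := det_resolvent_ne hζ z hz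
  set u : Fin (m + 1) → ℂ :=
    fun i => ∑ j, ((starRingEnd ℂ) (h j (Fin.last m)) * (z - ζ j)⁻¹) * h j i with hu
  have hAh : ∀ j, A *ᵥ h j = (z - ζ j) • h j := by
    intro j
    rw [hA, Matrix.sub_mulVec, Matrix.smul_mulVec, Matrix.one_mulVec, heig j, sub_smul]
  have hAu : A *ᵥ u = lastVec (m + 1) := by
    funext i
    show ∑ k, A i k * u k = _
    have swap : ∑ k, A i k * u k =
        ∑ j, ((starRingEnd ℂ) (h j (Fin.last m)) * (z - ζ j)⁻¹) * ∑ k, A i k * h j k := by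
      rw [hu]
      simp only [Finset.mul_sum]
      rw [Finset.sum_comm]
      apply Finset.sum_congr rfl
      intro j _
      apply Finset.sum_congr rfl
      intro k _
      ring
    rw [swap]
    have : ∀ j : Fin (m + 1), ((starRingEnd ℂ) (h j (Fin.last m)) * (z - ζ j)⁻¹) *
        ∑ k, A i k * h j k = (starRingEnd ℂ) (h j (Fin.last m)) * h j i := by
      intro j
      have : ∑ k, A i k * h j k = (z - ζ j) * h j i := by
        have := congrFun (hAh j) i
        rw [Matrix.mulVec, dotProduct] at this
        rw [this, Pi.smul_apply, smul_eq_mul]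
      rw [this]
      have hzj : z - ζ j ≠ 0 := sub_ne_zero.2 (hz j)
      field_simp
    rw [Finset.sum_congr rfl (fun j _ => this j)]
    have := hcomp i (Fin.last m)
    have heq : ∑ j, (starRingEnd ℂ) (h j (Fin.last m)) * h j i =
        ∑ j, h j i * (starRingEnd ℂ) (h j (Fin.last m)) := by
      apply Finset.sum_congr rfl; intro j _; ring
    rw [heq, this, lastVec]
    by_cases hik : i = Fin.last m
    · rw [if_pos hik, if_pos (by rw [hik]; rfl)]
    · rw [if_neg hik, if_neg (fun hc => hik (Fin.ext (by simpa using hc)))]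
  have huA : A⁻¹ *ᵥ lastVec (m + 1) = u := by
    rw [← hAu, Matrix.mulVec_mulVec, Matrix.nonsing_inv_mul A (Ne.isUnit hdet),
      Matrix.one_mulVec]
  rw [weylFn, ← hA, huA, innerC_lastVec, hu]
end Aux7
/-- the Weyl function of a finite CMV matrix equals `Φ_{n-1}/Φ̃_n`;
`Φ_{n-1}(ζ_j) ≠ 0` at every eigenvalue; the masses `μ_j = |⟨h_j, e_n⟩|²` of the `n`-th spectral
measure satisfy `μ_j = Φ_{n-1}(ζ_j)/Φ̃_n'(ζ_j) > 0` and `∑ μ_j = 1`. -/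
theorem weyl_function_and_masses (n : ℕ) (hn : 2 ≤ n)
    (α : ℕ → ℂ) (hα : ∀ j, j < n - 1 → ‖α j‖ < 1)
    (β : ℂ) (hβ : ‖β‖ = 1)
    (ζ : Fin n → ℂ) (hζinj : Function.Injective ζ)
    (hζ : Matrix.charpoly (CMVmat n α β) = ∏ j, (Polynomial.X - Polynomial.C (ζ j)))
    (h : Fin n → (Fin n → ℂ))
    (heig : ∀ j, (CMVmat n α β) *ᵥ (h j) = ζ j • h j)
    (horth : ∀ j k, innerC (h j) (h k) = if j = k then 1 else 0) :
    (∀ z : ℂ, (∀ j, z ≠ ζ j) →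
      weylFn (CMVmat n α β) z =
        (PhiPoly n α β (n - 1)).eval z / (Matrix.charpoly (CMVmat n α β)).eval z) ∧
    (∀ j, (PhiPoly n α β (n - 1)).eval (ζ j) ≠ 0) ∧
    (∀ j, 0 < ‖innerC (h j) (lastVec n)‖ ^ 2 ∧
      ((‖innerC (h j) (lastVec n)‖ ^ 2 : ℝ) : ℂ) =
        (PhiPoly n α β (n - 1)).eval (ζ j) /
          (Polynomial.derivative (Matrix.charpoly (CMVmat n α β))).eval (ζ j)) ∧
    ∑ j, ‖innerC (h j) (lastVec n)‖ ^ 2 = 1 := by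
  obtain ⟨m, rfl⟩ : ∃ m, n = m + 1 := ⟨n - 1, by omega⟩
  simp only [Nat.add_sub_cancel]
  set C := CMVmat (m + 1) α β with hC
  have hdetC : C.det ≠ 0 := det_CMV_ne hn hα hβ
  have hζ0 : ∀ j, ζ j ≠ 0 := by
    intro j hzero
    have hev := congrArg (Polynomial.eval 0) hζ
    rw [charpoly_eval, eval_prod] at hev
    have hL : (∏ j, Polynomial.eval 0 (Polynomial.X - Polynomial.C (ζ j))) ≠ 0 := by
      rw [← hev, zero_smul, zero_sub, Matrix.det_neg]
      exact mul_ne_zero (pow_ne_zero _ (neg_ne_zero.2 one_ne_zero)) hdetC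
    apply hL
    apply Finset.prod_eq_zero (Finset.mem_univ j)
    simp [hzero]
  have hcomp := completeness h horth
  have hμeq : ∀ j, innerC (h j) (lastVec (m + 1)) = h j (Fin.last m) :=
    fun j => innerC_lastVec _
  have hlast_ne : ∀ j, h j (Fin.last m) ≠ 0 := by
    intro j hc
    have hzero := eigvec_last_ne_zero (n := m + 1) hn hα hβ (hζ0 j) (heig j) hc
    have h1 := horth j j
    rw [if_pos rfl, hzero] at h1
    simp [innerC] at h1
  have part1 : ∀ z, (∀ j, z ≠ ζ j) →
      weylFn C z = (PhiPoly (m + 1) α β m).eval z / (Matrix.charpoly C).eval z :=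
    fun z hz => weyl_eq_ratio z (det_resolvent_ne hζ z hz)
  set μ : Fin (m + 1) → ℝ := fun j => ‖h j (Fin.last m)‖ ^ 2 with hμdef
  have hterm : ∀ j, (starRingEnd ℂ) (h j (Fin.last m)) * h j (Fin.last m) = ((μ j : ℝ) : ℂ) := by
    intro j
    rw [mul_comm, Complex.mul_conj, hμdef]
    rw [← Complex.sq_norm]
  have hres : ∀ z, (∀ j, z ≠ ζ j) → weylFn C z = ∑ j, ((μ j : ℝ) : ℂ) * (z - ζ j)⁻¹ := by
    intro z hz
    rw [resolvent_sum hζ h heig hcomp z hz]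
    apply Finset.sum_congr rfl
    intro j _
    rw [← hterm j]; ring
  set P := PhiPoly (m + 1) α β m with hP
  set Q : Polynomial ℂ := ∑ j, Polynomial.C ((μ j : ℝ) : ℂ) *
      ∏ k ∈ Finset.univ.erase j, (Polynomial.X - Polynomial.C (ζ k)) with hQ
  have hQeval : ∀ z : ℂ, Q.eval z =
      ∑ j, ((μ j : ℝ) : ℂ) * ∏ k ∈ Finset.univ.erase j, (z - ζ k) := by
    intro z
    rw [hQ, eval_finset_sum]
    apply Finset.sum_congr rfl
    intro j _
    rw [eval_mul, eval_C, eval_prod]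
    simp
  have hPQ : P = Q := by
    rw [← sub_eq_zero]
    apply Polynomial.eq_zero_of_infinite_isRoot
    apply ((Set.finite_range ζ).infinite_compl).mono
    intro z hzmem
    have hz : ∀ j, z ≠ ζ j := by
      intro j hc; exact hzmem ⟨j, hc.symm⟩
    show (P - Q).IsRoot z
    have hDne : (Matrix.charpoly C).eval z ≠ 0 := by
      rw [eval_charpoly_prod hζ z]
      exact Finset.prod_ne_zero_iff.2 fun j _ => sub_ne_zero.2 (hz j)
    have h1 := (part1 z hz).symm.trans (hres z hz)
    rw [div_eq_iff hDne] at h1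
    rw [Polynomial.IsRoot, eval_sub, h1, hQeval, Finset.sum_mul, sub_eq_zero]
    apply Finset.sum_congr rfl
    intro j _
    rw [eval_charpoly_prod hζ z, ← Finset.mul_prod_erase _ _ (Finset.mem_univ j)]
    have hzj : z - ζ j ≠ 0 := sub_ne_zero.2 (hz j)
    field_simp
  have hDj : ∀ j, ∏ k ∈ Finset.univ.erase j, (ζ j - ζ k) ≠ 0 := by
    intro j
    apply Finset.prod_ne_zero_iff.2
    intro k hk
    exact sub_ne_zero.2 fun hc => (Finset.ne_of_mem_erase hk) ((hζinj hc).symm)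
  have hPeval : ∀ j, P.eval (ζ j) = ((μ j : ℝ) : ℂ) * ∏ k ∈ Finset.univ.erase j, (ζ j - ζ k) := by
    intro j
    rw [hPQ, hQeval]
    rw [Finset.sum_eq_single j]
    · intro i _ hij
      have hz : ∏ k ∈ Finset.univ.erase i, (ζ j - ζ k) = 0 :=
        Finset.prod_eq_zero (Finset.mem_erase.2 ⟨Ne.symm hij, Finset.mem_univ j⟩) (sub_self _)
      rw [hz, mul_zero]
    · intro hc; exact absurd (Finset.mem_univ j) hc
  have hderiv : ∀ j, (Polynomial.derivative (Matrix.charpoly C)).eval (ζ j) =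
      ∏ k ∈ Finset.univ.erase j, (ζ j - ζ k) := by
    intro j
    rw [hζ]
    exact deriv_prod_eval ζ j
  have hμpos : ∀ j, 0 < μ j := fun j => pow_pos (norm_pos_iff.mpr (hlast_ne j)) 2
  have hsum : ∑ j, μ j = 1 := by
    have hc := hcomp (Fin.last m) (Fin.last m)
    rw [if_pos rfl] at hc
    have hcc : ((∑ j, μ j : ℝ) : ℂ) = ((1 : ℝ) : ℂ) := by
      push_cast
      rw [← hc]
      apply Finset.sum_congr rfl
      intro j _
      rw [← hterm j]; ring
    exact_mod_cast hcc
  refine ⟨part1, ?_, ?_, ?_⟩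
  · intro j
    rw [hPeval j]
    exact mul_ne_zero (Complex.ofReal_ne_zero.2 (hμpos j).ne') (hDj j)
  · intro j
    constructor
    · rw [hμeq j]
      exact hμpos j
    · rw [hμeq j, hPeval j, hderiv j, mul_div_cancel_right₀ _ (hDj j)]
  · rw [Finset.sum_congr rfl (fun j _ => by rw [hμeq j])]
    exact hsum

end CMVPaper
end
end

section
/- Let C = C(α₀,…,α_{n-2};β) be a finite CMV matrix of order n and τ ∈ 𝕋. Then the finite CMV matrix C_τ = C(α₀τ, α₁τ², …, α_{n-2}τ^{n-1}; βτⁿ) satisfies det(zI − C_τ) = τ^{-n}·det(τz·I − C); consequently Σ(C_τ) = τ^{-1}·Σ(C) = {τ^{-1}ζ : ζ ∈ Σ(C)}. -/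
open Complex Polynomial Matrix BigOperators Finset

noncomputable section

namespace CMVPaper

/-! ### Auxiliary material for the rotation theorem -/

/-- Diagonal exponents for the left conjugating matrix. -/
def dd1 (i : ℕ) : ℤ := if Even i then -((i / 2 : ℕ) : ℤ) else ((i / 2 : ℕ) : ℤ) + 1

/-- Diagonal exponents for the middle diagonal matrix. -/
def dd2 (i : ℕ) : ℤ := if Even i then -((i / 2 : ℕ) : ℤ) - 1 else ((i / 2 : ℕ) : ℤ)

lemma dd1_even {i : ℕ} (h : i % 2 = 0) : dd1 i = -((i / 2 : ℕ) : ℤ) :=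
  if_pos (Nat.even_iff.mpr h)

lemma dd1_odd {i : ℕ} (h : i % 2 = 1) : dd1 i = ((i / 2 : ℕ) : ℤ) + 1 :=
  if_neg (by simp [Nat.even_iff, h])

lemma dd2_even {i : ℕ} (h : i % 2 = 0) : dd2 i = -((i / 2 : ℕ) : ℤ) - 1 :=
  if_pos (Nat.even_iff.mpr h)

lemma dd2_odd {i : ℕ} (h : i % 2 = 1) : dd2 i = ((i / 2 : ℕ) : ℤ) :=
  if_neg (by simp [Nat.even_iff, h])

lemma abs_one_ne_zero {τ : ℂ} (hτ : ‖τ‖ = 1) : τ ≠ 0 := by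
  intro h; simp [h] at hτ

lemma conj_eq_inv {τ : ℂ} (hτ : ‖τ‖ = 1) : (starRingEnd ℂ) τ = τ⁻¹ := by
  have h : τ * (starRingEnd ℂ) τ = 1 := by
    rw [Complex.mul_conj]
    norm_cast
    rw [Complex.normSq_eq_norm_sq, hτ]; norm_num
  exact eq_inv_of_mul_eq_one_right h

lemma conj_pow_eq {τ : ℂ} (hτ : ‖τ‖ = 1) (m : ℕ) :
    (starRingEnd ℂ) (τ ^ m) = τ ^ (-(m : ℤ)) := by
  rw [map_pow, conj_eq_inv hτ, inv_pow, ← zpow_natCast τ m, ← _root_.zpow_neg]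

lemma rho_rot {τ : ℂ} (hτ : ‖τ‖ = 1) (a : ℂ) (m : ℕ) :
    rhoC (a * τ ^ m) = rhoC a := by
  unfold rhoC
  rw [norm_mul, norm_pow, hτ, one_pow, mul_one]

lemma collectL {τ : ℂ} (hτ0 : τ ≠ 0) (a b c : ℤ) (x : ℂ) (h : a + b = c) :
    τ ^ a * x * τ ^ b = x * τ ^ c := by
  subst h; rw [zpow_add₀ hτ0]; ring

lemma collectM {τ : ℂ} (hτ0 : τ ≠ 0) (a b c : ℤ) (x : ℂ) (h : a + b - 1 = c) :
    τ⁻¹ * (τ ^ a * x * τ ^ b) = x * τ ^ c := by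
  have hc : c = a + b + (-1) := by omega
  subst hc
  rw [zpow_add₀ hτ0, zpow_add₀ hτ0, _root_.zpow_neg, zpow_one]
  field_simp

lemma tri_apply {n : ℕ} (d e : Fin n → ℂ) (M : Matrix (Fin n) (Fin n) ℂ) (i j : Fin n) :
    (Matrix.diagonal d * M * Matrix.diagonal e) i j = d i * M i j * e j := by
  rw [Matrix.mul_diagonal, Matrix.diagonal_mul]

lemma charpoly_eval_s18 {n : ℕ} (M : Matrix (Fin n) (Fin n) ℂ) (z : ℂ) :
    (Matrix.charpoly M).eval z = (z • (1 : Matrix (Fin n) (Fin n) ℂ) - M).det := by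
  rw [Matrix.charpoly, ← Polynomial.coe_evalRingHom, RingHom.map_det]
  congr 1
  ext i j
  by_cases h : i = j
  · subst h
    simp [charmatrix_apply, Matrix.one_apply, Matrix.sub_apply, Matrix.smul_apply,
      Matrix.diagonal_apply, smul_eq_mul]
  · simp [charmatrix_apply, Matrix.one_apply, h, Matrix.diagonal_apply, Matrix.sub_apply,
      Matrix.smul_apply, smul_eq_mul]

lemma cmvL_rot (n : ℕ) (α : ℕ → ℂ) (β τ : ℂ) (hτ : ‖τ‖ = 1) :
    cmvL n (fun k => α k * τ ^ (k + 1)) (β * τ ^ n) =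
      Matrix.diagonal (fun i : Fin n => τ ^ dd1 (i : ℕ)) * cmvL n α β *
        Matrix.diagonal (fun i : Fin n => τ ^ dd2 (i : ℕ)) := by
  have hτ0 : τ ≠ 0 := abs_one_ne_zero hτ
  ext i j
  rw [tri_apply]
  show (cmvL n (fun k => α k * τ ^ (k + 1)) (β * τ ^ n)) i j
      = τ ^ dd1 (i : ℕ) * (cmvL n α β) i j * τ ^ dd2 (j : ℕ)
  unfold cmvL
  simp only [Matrix.of_apply]
  split_ifs with h1 h2 h3 h4 h5 h6 h7
  · -- even, last, j = i
    have hi2 : (i : ℕ) % 2 = 0 := Nat.even_iff.mp h1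
    have hj : (j : ℕ) = (i : ℕ) := by rw [h3]
    have hin : (i : ℕ) < n := i.isLt
    rw [_root_.map_mul, conj_pow_eq hτ n,
      collectL hτ0 _ _ (-(n : ℤ)) _ (by rw [hj, dd1_even hi2, dd2_even hi2]; omega)]
  · simp
  · -- even, not last, j = i
    have hi2 : (i : ℕ) % 2 = 0 := Nat.even_iff.mp h1
    have hj : (j : ℕ) = (i : ℕ) := by rw [h4]
    rw [show (i : ℕ) + 1 = ((i : ℕ) + 1) from rfl, _root_.map_mul, conj_pow_eq hτ ((i : ℕ) + 1),
      collectL hτ0 _ _ (-(((i : ℕ) : ℤ) + 1)) _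
        (by rw [hj, dd1_even hi2, dd2_even hi2]; omega)]
    push_cast
    ring
  · -- even, not last, j = i + 1
    have hi2 : (i : ℕ) % 2 = 0 := Nat.even_iff.mp h1
    have hj2 : (j : ℕ) % 2 = 1 := by omega
    rw [collectL hτ0 _ _ 0 _
      (by rw [dd1_even hi2, dd2_odd hj2]; omega), rho_rot hτ, zpow_zero, mul_one]
  · simp
  · -- odd, j + 1 = i
    have hi2 : (i : ℕ) % 2 = 1 := Nat.odd_iff.mp (Nat.odd_iff.mpr (by
      rcases Nat.even_or_odd (i : ℕ) with h | h
      · exact absurd h h1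
      · exact Nat.odd_iff.mp h))
    have hj2 : (j : ℕ) % 2 = 0 := by omega
    rw [collectL hτ0 _ _ 0 _
      (by rw [dd1_odd hi2, dd2_even hj2]; omega), rho_rot hτ, zpow_zero, mul_one]
  · -- odd, j = i
    have hi2 : (i : ℕ) % 2 = 1 := by
      rcases Nat.even_or_odd (i : ℕ) with h | h
      · exact absurd h h1
      · exact Nat.odd_iff.mp h
    have hj : (j : ℕ) = (i : ℕ) := by rw [h7]
    rw [collectL hτ0 _ _ ((i : ℕ) : ℤ) _ (by rw [hj, dd1_odd hi2, dd2_odd hi2]; omega),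
      show (i : ℕ) - 1 + 1 = (i : ℕ) from by omega, ← zpow_natCast τ (i : ℕ)]
    ring
  · simp

lemma cmvM_rot (n : ℕ) (α : ℕ → ℂ) (β τ : ℂ) (hτ : ‖τ‖ = 1) :
    cmvM n (fun k => α k * τ ^ (k + 1)) (β * τ ^ n) =
      τ⁻¹ • (Matrix.diagonal (fun i : Fin n => τ ^ (-dd2 (i : ℕ))) * cmvM n α β *
        Matrix.diagonal (fun i : Fin n => τ ^ (-dd1 (i : ℕ)))) := by
  have hτ0 : τ ≠ 0 := abs_one_ne_zero hτ
  ext i j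
  rw [Matrix.smul_apply, smul_eq_mul, tri_apply]
  show (cmvM n (fun k => α k * τ ^ (k + 1)) (β * τ ^ n)) i j
      = τ⁻¹ * (τ ^ (-dd2 (i : ℕ)) * (cmvM n α β) i j * τ ^ (-dd1 (j : ℕ)))
  unfold cmvM
  simp only [Matrix.of_apply]
  split_ifs with h1 h2 h3 h4 h5 h6 h7 h8 h9
  · -- i = 0, j = i
    have hj : (j : ℕ) = (i : ℕ) := by rw [h2]
    rw [collectM hτ0 _ _ 0 _
      (by rw [hj, h1, dd1_even (by omega), dd2_even (by omega)]; simp)]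
    simp
  · simp
  · -- odd, last, j = i
    have hi2 : (i : ℕ) % 2 = 1 := Nat.odd_iff.mp h3
    have hj : (j : ℕ) = (i : ℕ) := by rw [h5]
    have hin : (i : ℕ) < n := i.isLt
    rw [_root_.map_mul, conj_pow_eq hτ n,
      collectM hτ0 _ _ (-(n : ℤ)) _ (by rw [hj, dd1_odd hi2, dd2_odd hi2]; omega)]
  · simp
  · -- odd, not last, j = i
    have hi2 : (i : ℕ) % 2 = 1 := Nat.odd_iff.mp h3
    have hj : (j : ℕ) = (i : ℕ) := by rw [h6]
    rw [_root_.map_mul, conj_pow_eq hτ ((i : ℕ) + 1),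
      collectM hτ0 _ _ (-(((i : ℕ) : ℤ) + 1)) _
        (by rw [hj, dd1_odd hi2, dd2_odd hi2]; omega)]
    push_cast
    ring
  · -- odd, not last, j = i + 1
    have hi2 : (i : ℕ) % 2 = 1 := Nat.odd_iff.mp h3
    have hj2 : (j : ℕ) % 2 = 0 := by omega
    rw [collectM hτ0 _ _ 0 _
      (by rw [dd1_even hj2, dd2_odd hi2]; omega), rho_rot hτ, zpow_zero, mul_one]
  · simp
  · -- even (not 0), j + 1 = i
    have hi2 : (i : ℕ) % 2 = 0 := by
      rcases Nat.even_or_odd (i : ℕ) with h | h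
      · exact Nat.even_iff.mp h
      · exact absurd h h3
    have hj2 : (j : ℕ) % 2 = 1 := by omega
    rw [collectM hτ0 _ _ 0 _
      (by rw [dd1_odd hj2, dd2_even hi2]; omega), rho_rot hτ, zpow_zero, mul_one]
  · -- even (not 0), j = i
    have hi2 : (i : ℕ) % 2 = 0 := by
      rcases Nat.even_or_odd (i : ℕ) with h | h
      · exact Nat.even_iff.mp h
      · exact absurd h h3
    have hi1 : 1 ≤ (i : ℕ) := by omega
    have hj : (j : ℕ) = (i : ℕ) := by rw [h9]
    rw [collectM hτ0 _ _ ((i : ℕ) : ℤ) _ (by rw [hj, dd1_even hi2, dd2_even hi2]; omega),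
      show (i : ℕ) - 1 + 1 = (i : ℕ) from by omega, ← zpow_natCast τ (i : ℕ)]
    ring
  · simp

/-- Example 1: rotating the Verblunsky coefficients,
`C_τ = C(α₀τ, α₁τ², …, α_{n-2}τ^{n-1}; βτⁿ)` satisfies
`det (zI − C_τ) = τ^{−n} det (τz·I − C)`, so `Σ(C_τ) = τ^{−1} Σ(C)`. -/
theorem rotation_of_spectrum (n : ℕ) (hn : 2 ≤ n)
    (α : ℕ → ℂ) (hα : ∀ j, j < n - 1 → ‖α j‖ < 1)
    (β : ℂ) (hβ : ‖β‖ = 1)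
    (τ : ℂ) (hτ : ‖τ‖ = 1) :
    (∀ z : ℂ,
      (Matrix.charpoly (CMVmat n (fun k => α k * τ ^ (k + 1)) (β * τ ^ n))).eval z =
        τ⁻¹ ^ n * (Matrix.charpoly (CMVmat n α β)).eval (τ * z)) ∧
    specSet (CMVmat n (fun k => α k * τ ^ (k + 1)) (β * τ ^ n)) =
      (fun ζ => τ⁻¹ * ζ) '' specSet (CMVmat n α β) := by
  have hτ0 : τ ≠ 0 := abs_one_ne_zero hτ
  set D1 : Matrix (Fin n) (Fin n) ℂ := Matrix.diagonal (fun i : Fin n => τ ^ dd1 (i : ℕ))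
  set D1' : Matrix (Fin n) (Fin n) ℂ := Matrix.diagonal (fun i : Fin n => τ ^ (-dd1 (i : ℕ)))
  set D2 : Matrix (Fin n) (Fin n) ℂ := Matrix.diagonal (fun i : Fin n => τ ^ dd2 (i : ℕ))
  set D2' : Matrix (Fin n) (Fin n) ℂ := Matrix.diagonal (fun i : Fin n => τ ^ (-dd2 (i : ℕ)))
  have hDD : D1 * D1' = 1 := by
    rw [Matrix.diagonal_mul_diagonal]
    convert Matrix.diagonal_one with i
    rw [← zpow_add₀ hτ0, add_neg_cancel, zpow_zero]
  have hDD2 : D2 * D2' = 1 := by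
    rw [Matrix.diagonal_mul_diagonal]
    convert Matrix.diagonal_one with i
    rw [← zpow_add₀ hτ0, add_neg_cancel, zpow_zero]
  have hC : CMVmat n (fun k => α k * τ ^ (k + 1)) (β * τ ^ n) =
      τ⁻¹ • (D1 * CMVmat n α β * D1') := by
    unfold CMVmat
    rw [cmvL_rot n α β τ hτ, cmvM_rot n α β τ hτ, mul_smul_comm]
    congr 1
    simp only [Matrix.mul_assoc]
    rw [← Matrix.mul_assoc D2 D2', hDD2, Matrix.one_mul]
  have key : ∀ z : ℂ,
      (Matrix.charpoly (CMVmat n (fun k => α k * τ ^ (k + 1)) (β * τ ^ n))).eval z =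
        τ⁻¹ ^ n * (Matrix.charpoly (CMVmat n α β)).eval (τ * z) := by
    intro z
    rw [charpoly_eval_s18, charpoly_eval_s18, hC]
    have h1 : z • (1 : Matrix (Fin n) (Fin n) ℂ) - τ⁻¹ • (D1 * CMVmat n α β * D1') =
        τ⁻¹ • (D1 * ((τ * z) • (1 : Matrix (Fin n) (Fin n) ℂ) - CMVmat n α β) * D1') := by
      rw [Matrix.mul_sub, Matrix.sub_mul, smul_sub]
      congr 1
      rw [mul_smul_comm, smul_mul_assoc, Matrix.mul_one, hDD, smul_smul]
      congr 1
      field_simp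
    rw [h1, Matrix.det_smul, Matrix.det_mul, Matrix.det_mul]
    have hdet1 : D1.det * D1'.det = 1 := by rw [← Matrix.det_mul, hDD, Matrix.det_one]
    have : D1.det * ((τ * z) • (1 : Matrix (Fin n) (Fin n) ℂ) - CMVmat n α β).det * D1'.det
        = ((τ * z) • (1 : Matrix (Fin n) (Fin n) ℂ) - CMVmat n α β).det := by
      calc D1.det * ((τ * z) • (1 : Matrix (Fin n) (Fin n) ℂ) - CMVmat n α β).det * D1'.det
          = D1.det * D1'.det *
            ((τ * z) • (1 : Matrix (Fin n) (Fin n) ℂ) - CMVmat n α β).det := by ring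
        _ = ((τ * z) • (1 : Matrix (Fin n) (Fin n) ℂ) - CMVmat n α β).det := by
            rw [hdet1, one_mul]
    rw [this, Fintype.card_fin]
  refine ⟨key, ?_⟩
  ext z
  simp only [specSet, Set.mem_setOf_eq, Set.mem_image]
  rw [key z]
  constructor
  · intro h
    refine ⟨τ * z, ?_, by field_simp⟩
    have hne : τ⁻¹ ^ n ≠ 0 := pow_ne_zero _ (inv_ne_zero hτ0)
    exact (mul_eq_zero.mp h).resolve_left hne
  · rintro ⟨w, hw, rfl⟩
    have : τ * (τ⁻¹ * w) = w := by field_simp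
    rw [this, hw, mul_zero]

end CMVPaper
end
end
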